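/- Let F be the free group on two generators a, b, let φ ∈ Aut(F) be determined by φ(a) = a, φ(b) = ba, and let Φ ∈ Out(F) be its outer class. Out(F) is finitely generated (it is isomorphic to GL₂(ℤ)); fix a finite generating set T of Out(F) with associated word metric d_T. Then n ↦ d_T(1, Φⁿ) grows linearly (it is equivalent to n ↦ n), while n ↦ d_Lip(1, Φⁿ) grows logarithmically (equivalent to n ↦ ln(n+1)); consequently the identity map of Out(F) is not a quasi-isometry between (Out(F), d_Lip) and (Out(F), d_T), i.e. the Lipschitz pseudo-metric and the word metric on Out(F) are not quasi-isometric. -/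

import Mathlib

open Set Pointwise

variable {G : Type*} [Group G]

/-- The word length of `g` with respect to a generating set `S`:
the least `n` such that `g` is a product of `n` elements of `S ∪ S⁻¹`. -/
noncomputable def wordLength (S : Set G) (g : G) : ℕ :=
  sInf {n : ℕ | ∃ l : List G, l.length = n ∧ (∀ x ∈ l, x ∈ S ∪ S⁻¹) ∧ l.prod = g}

/-- The word metric associated to a generating set `S`, as a real number. -/
noncomputable def wordDist (S : Set G) (g h : G) : ℝ :=
  (wordLength S (g⁻¹ * h) : ℝ)

/-- The conjugacy norm of (the conjugacy class of) `g`: the minimal word length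
of an element conjugate to `g`. -/
noncomputable def conjNorm (S : Set G) (g : G) : ℕ :=
  sInf {n : ℕ | ∃ x : G, n = wordLength S (x * g * x⁻¹)}

/-- The Lipschitz pseudo-metric, computed on automorphisms (it only depends on the
outer classes): `d_Lip(φ₁, φ₂) = ln sup_c ‖φ₂⁻¹(c)‖ / ‖φ₁⁻¹(c)‖`, the supremum being
over all non-trivial conjugacy classes `c`. -/
noncomputable def dLipAut (S : Set G) (φ₁ φ₂ : MulAut G) : ℝ :=
  Real.log (sSup {r : ℝ | ∃ g : G, g ≠ 1 ∧
    r = (conjNorm S (φ₂⁻¹ g) : ℝ) / (conjNorm S (φ₁⁻¹ g) : ℝ)})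

instance : ((MulAut.conj : G →* MulAut G).range).Normal := by
  constructor
  rintro x ⟨g, rfl⟩ ψ
  refine ⟨ψ g, ?_⟩
  ext y
  simp [MulAut.conj, mul_assoc]

/-- The outer automorphism group `Out(G) = Aut(G)/Inn(G)`. -/
abbrev OutGroup (G : Type*) [Group G] :=
  MulAut G ⧸ (MulAut.conj : G →* MulAut G).range

/-- The Lipschitz pseudo-metric on `Out(G)`; it is computed using any
representatives of the outer classes (the value does not depend on this choice,
whence the infimum). -/
noncomputable def dLipOut (S : Set G) (Φ₁ Φ₂ : OutGroup G) : ℝ :=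
  sInf {d : ℝ | ∃ φ₁ φ₂ : MulAut G, (φ₁ : OutGroup G) = Φ₁ ∧ (φ₂ : OutGroup G) = Φ₂ ∧
    d = dLipAut S φ₁ φ₂}

/-- Gromov hyperbolicity (four-point condition) for the word metric of `(G, S)`. -/
def IsHyperbolic (S : Set G) : Prop :=
  ∃ δ : ℝ, 0 ≤ δ ∧ ∀ x y z w : G,
    wordDist S x z + wordDist S y w ≤
      max (wordDist S x y + wordDist S z w) (wordDist S x w + wordDist S y z) + 2 * δ

/-- A group is virtually cyclic if it has a cyclic subgroup of finite index;
a group is *non-elementary* if it is not virtually cyclic. -/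
def IsVirtuallyCyclic (G : Type*) [Group G] : Prop :=
  ∃ H : Subgroup G, H.FiniteIndex ∧ IsCyclic H

/-- A length function on a group `H`. -/
structure IsLengthFunction {H : Type*} [Group H] (L : H → ℕ) : Prop where
  eq_zero_iff : ∀ h : H, L h = 0 ↔ h = 1
  inv_eq : ∀ h : H, L h⁻¹ = L h
  subadd : ∀ h₁ h₂ : H, L (h₁ * h₂) ≤ L h₁ + L h₂
  growth : ∃ lam : ℝ, 0 < lam ∧ ∀ r : ℕ, ∃ t : Finset H,
    {h : H | L h ≤ r} ⊆ ↑t ∧ (t.card : ℝ) ≤ lam ^ r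

/-- A length function on the (additive) group `ℤ`. -/
structure IsLengthFunctionZ (L : ℤ → ℕ) : Prop where
  eq_zero_iff : ∀ n : ℤ, L n = 0 ↔ n = 0
  neg_eq : ∀ n : ℤ, L (-n) = L n
  subadd : ∀ m n : ℤ, L (m + n) ≤ L m + L n
  growth : ∃ lam : ℝ, 0 < lam ∧ ∀ r : ℕ, ∃ t : Finset ℤ,
    {n : ℤ | L n ≤ r} ⊆ ↑t ∧ (t.card : ℝ) ≤ lam ^ r

/-- `f₁ ≺ f₂` for functions on `ℤ`. -/
def PrecZ (f₁ f₂ : ℤ → ℝ) : Prop := ∃ C : ℝ, 0 < C ∧ ∀ n : ℤ, f₁ n ≤ C * f₂ n + C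

/-- `f₁ ≍ f₂` (equivalence of growth) for functions on `ℤ`. -/
def EquivZ (f₁ f₂ : ℤ → ℝ) : Prop := PrecZ f₁ f₂ ∧ PrecZ f₂ f₁

/-- `f₁ ≺ f₂` for functions on `ℕ`. -/
def PrecN (f₁ f₂ : ℕ → ℝ) : Prop := ∃ C : ℝ, 0 < C ∧ ∀ n : ℕ, f₁ n ≤ C * f₂ n + C

/-- `f₁ ≍ f₂` (equivalence of growth) for functions on `ℕ`. -/
def EquivN (f₁ f₂ : ℕ → ℝ) : Prop := PrecN f₁ f₂ ∧ PrecN f₂ f₁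

/-- A group is finitely presented if it is isomorphic to the quotient of a
finitely generated free group by the normal closure of finitely many relators. -/
def FinitelyPresented (Q : Type*) [Group Q] : Prop :=
  ∃ (n : ℕ) (rels : Finset (FreeGroup (Fin n))),
    Nonempty (PresentedGroup (↑rels : Set (FreeGroup (Fin n))) ≃* Q)

/-- A geodesic from `x` to `y` in a metric space, recorded as its image `s`. -/
def IsGeodesicFrom {X : Type*} [MetricSpace X] (s : Set X) (x y : X) : Prop :=
  ∃ γ : ℝ → X, γ 0 = x ∧ γ (dist x y) = y ∧
    (∀ u ∈ Set.Icc (0:ℝ) (dist x y), ∀ v ∈ Set.Icc (0:ℝ) (dist x y),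
      dist (γ u) (γ v) = |u - v|) ∧
    s = γ '' Set.Icc (0:ℝ) (dist x y)

/-- A geodesic metric space: any two points are joined by a geodesic. -/
def GeodesicSpace (X : Type*) [MetricSpace X] : Prop :=
  ∀ x y : X, ∃ s : Set X, IsGeodesicFrom s x y

/-- All geodesic triangles are `δ`-thin: each side lies in the `δ`-neighborhood of
the union of the other two sides. -/
def ThinTriangles (X : Type*) [MetricSpace X] (δ : ℝ) : Prop :=
  ∀ x y z : X, ∀ s₁ s₂ s₃ : Set X,
    IsGeodesicFrom s₁ x y → IsGeodesicFrom s₂ y z → IsGeodesicFrom s₃ x z →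
    ∀ p ∈ s₃, ∃ q ∈ s₁ ∪ s₂, dist p q ≤ δ


section Aux
set_option linter.unnecessarySimpa false

namespace WL

def wset (S : Set G) (g : G) : Set ℕ :=
  {n : ℕ | ∃ l : List G, l.length = n ∧ (∀ x ∈ l, x ∈ S ∪ S⁻¹) ∧ l.prod = g}

lemma wordLength_eq (S : Set G) (g : G) : wordLength S g = sInf (wset S g) := rfl

lemma wset_nonempty {S : Set G} (hS : Subgroup.closure S = ⊤) (g : G) :
    (wset S g).Nonempty := by
  have hg : g ∈ Submonoid.closure (S ∪ S⁻¹) := by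
    have : g ∈ (Subgroup.closure S).toSubmonoid := by
      rw [hS]; trivial
    rwa [Subgroup.closure_toSubmonoid] at this
  obtain ⟨l, hl, hp⟩ := Submonoid.exists_list_of_mem_closure hg
  exact ⟨l.length, l, rfl, hl, hp⟩

lemma exists_word {S : Set G} (hS : Subgroup.closure S = ⊤) (g : G) :
    ∃ l : List G, l.length = wordLength S g ∧ (∀ x ∈ l, x ∈ S ∪ S⁻¹) ∧ l.prod = g :=
  Nat.sInf_mem (wset_nonempty hS g)

lemma wordLength_le {S : Set G} {g : G} {l : List G}
    (hl : ∀ x ∈ l, x ∈ S ∪ S⁻¹) (hp : l.prod = g) : wordLength S g ≤ l.length :=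
  Nat.sInf_le ⟨l, rfl, hl, hp⟩

lemma wordLength_one (S : Set G) : wordLength S (1 : G) = 0 :=
  Nat.le_zero.mp (by simpa using wordLength_le (S := S) (l := []) (by simp) (by simp))

lemma eq_one_of_wordLength_eq_zero {S : Set G} (hS : Subgroup.closure S = ⊤) {g : G}
    (h : wordLength S g = 0) : g = 1 := by
  obtain ⟨l, hlen, _, hp⟩ := exists_word hS g
  rw [h, List.length_eq_zero_iff] at hlen
  simpa [hlen] using hp.symm

lemma wordLength_mul_le {S : Set G} (hS : Subgroup.closure S = ⊤) (g h : G) :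
    wordLength S (g * h) ≤ wordLength S g + wordLength S h := by
  obtain ⟨l₁, hl₁, hm₁, hp₁⟩ := exists_word hS g
  obtain ⟨l₂, hl₂, hm₂, hp₂⟩ := exists_word hS h
  have := wordLength_le (S := S) (g := g * h) (l := l₁ ++ l₂)
    (by intro x hx; rcases List.mem_append.mp hx with h | h; exacts [hm₁ x h, hm₂ x h])
    (by rw [List.prod_append, hp₁, hp₂])
  simpa [hl₁, hl₂] using this

lemma wset_mem_inv {S : Set G} {g : G} {n : ℕ} (h : n ∈ wset S g) : n ∈ wset S g⁻¹ := by
  obtain ⟨l, hlen, hm, hp⟩ := h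
  refine ⟨(l.map fun x => x⁻¹).reverse, by simp [hlen], ?_, ?_⟩
  · intro x hx
    simp only [List.mem_reverse, List.mem_map] at hx
    obtain ⟨y, hy, rfl⟩ := hx
    rcases hm y hy with h | h
    · exact Or.inr (by simpa using h)
    · exact Or.inl (by simpa using h)
  · rw [← List.prod_inv_reverse, hp]

lemma wordLength_inv {S : Set G} (g : G) : wordLength S g⁻¹ ≤ wordLength S g := by
  rcases (wset S g).eq_empty_or_nonempty with h | h
  · have h' : wset S g⁻¹ = ∅ := by
      rw [Set.eq_empty_iff_forall_notMem]
      intro n hn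
      have := wset_mem_inv hn
      rw [inv_inv] at this
      exact (Set.eq_empty_iff_forall_notMem.mp h) n this
    rw [wordLength_eq, wordLength_eq, h, h']
  · obtain ⟨l, hlen, hm, hp⟩ := Nat.sInf_mem h
    have hmem : wordLength S g ∈ wset S g := ⟨l, hlen, hm, hp⟩
    exact Nat.sInf_le (wset_mem_inv hmem)

lemma wordLength_inv_eq {S : Set G} (g : G) : wordLength S g⁻¹ = wordLength S g :=
  le_antisymm (wordLength_inv g) (by simpa using wordLength_inv (S := S) g⁻¹)

lemma wordLength_pow_le {S : Set G} (hS : Subgroup.closure S = ⊤) (g : G) (n : ℕ) :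
    wordLength S (g ^ n) ≤ n * wordLength S g := by
  induction n with
  | zero => simp [wordLength_one]
  | succ n ih =>
      calc wordLength S (g ^ (n+1)) = wordLength S (g ^ n * g) := by rw [pow_succ]
      _ ≤ wordLength S (g ^ n) + wordLength S g := wordLength_mul_le hS _ _
      _ ≤ n * wordLength S g + wordLength S g := by omega
      _ = (n+1) * wordLength S g := by ring

end WL

namespace GLB

abbrev GL2 := GL (Fin 2) ℤ

def S2 : GL2 :=
  ⟨!![0,1;1,0], !![0,1;1,0],
    by rw [Matrix.mul_fin_two, Matrix.one_fin_two]; norm_num,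
    by rw [Matrix.mul_fin_two, Matrix.one_fin_two]; norm_num⟩

def R2 : GL2 :=
  ⟨!![1,1;0,1], !![1,-1;0,1],
    by rw [Matrix.mul_fin_two, Matrix.one_fin_two]; norm_num,
    by rw [Matrix.mul_fin_two, Matrix.one_fin_two]; norm_num⟩

def Rz (b : ℤ) : GL2 :=
  ⟨!![1,b;0,1], !![1,-b;0,1],
    by rw [Matrix.mul_fin_two, Matrix.one_fin_two]; norm_num,
    by rw [Matrix.mul_fin_two, Matrix.one_fin_two]; norm_num⟩

def L2 : GL2 :=
  ⟨!![1,0;1,1], !![1,0;-1,1],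
    by rw [Matrix.mul_fin_two, Matrix.one_fin_two]; norm_num,
    by rw [Matrix.mul_fin_two, Matrix.one_fin_two]; norm_num⟩

def W2 : GL2 :=
  ⟨!![0,1;-1,0], !![0,-1;1,0],
    by rw [Matrix.mul_fin_two, Matrix.one_fin_two]; norm_num,
    by rw [Matrix.mul_fin_two, Matrix.one_fin_two]; norm_num⟩

lemma det_pm (M : GL2) :
    M.val 0 0 * M.val 1 1 - M.val 0 1 * M.val 1 0 = 1 ∨
    M.val 0 0 * M.val 1 1 - M.val 0 1 * M.val 1 0 = -1 := by
  have h : IsUnit (M.val.det) := (Matrix.isUnit_iff_isUnit_det _).mp M.isUnit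
  rw [Matrix.det_fin_two] at h
  exact Int.isUnit_iff.mp h

noncomputable def fcore (a b c d : ℤ) : ℤ :=
  if c = 0 then b * d else ⌊(a : ℚ) / (c : ℚ)⌋

noncomputable def fhat (M : GL2) : ℤ :=
  fcore (M.val 0 0) (M.val 0 1) (M.val 1 0) (M.val 1 1)

lemma val_mul_S2 (M : GL2) :
    (M * S2).val = !![M.val 0 1, M.val 0 0; M.val 1 1, M.val 1 0] := by
  show M.val * S2.val = _
  rw [Matrix.eta_fin_two M.val]
  show _ * !![0,1;1,0] = _
  rw [Matrix.mul_fin_two]; norm_num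

lemma val_mul_R2 (M : GL2) :
    (M * R2).val = !![M.val 0 0, M.val 0 0 + M.val 0 1;
                      M.val 1 0, M.val 1 0 + M.val 1 1] := by
  show M.val * R2.val = _
  rw [Matrix.eta_fin_two M.val]
  show _ * !![1,1;0,1] = _
  rw [Matrix.mul_fin_two]; norm_num

lemma floor_close {x y : ℚ} (h : |x - y| ≤ 1) : |⌊x⌋ - ⌊y⌋| ≤ 1 := by
  rw [abs_le] at h ⊢
  have h1 : ⌊y + (1:ℚ)⌋ = ⌊y⌋ + 1 := by
    have := Int.floor_add_intCast y (1 : ℤ)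
    simpa using this
  have h2 : ⌊x + (1:ℚ)⌋ = ⌊x⌋ + 1 := by
    have := Int.floor_add_intCast x (1 : ℤ)
    simpa using this
  constructor
  · have hyx : y ≤ x + 1 := by linarith
    have := Int.floor_le_floor hyx
    omega
  · have hxy : x ≤ y + 1 := by linarith
    have := Int.floor_le_floor hxy
    omega

lemma slope_close {a b c d : ℤ} (hdet : a * d - b * c = 1 ∨ a * d - b * c = -1)
    (hc : c ≠ 0) (hd : d ≠ 0) : |(a : ℚ) / c - (b : ℚ) / d| ≤ 1 := by
  have hc' : (c : ℚ) ≠ 0 := Int.cast_ne_zero.mpr hc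
  have hd' : (d : ℚ) ≠ 0 := Int.cast_ne_zero.mpr hd
  have key : (a : ℚ) / c - (b : ℚ) / d = ((a * d - b * c : ℤ) : ℚ) / ((c * d : ℤ) : ℚ) := by
    push_cast
    field_simp
  rw [key, abs_div]
  have h1 : |((a * d - b * c : ℤ) : ℚ)| = 1 := by
    rcases hdet with h | h <;> rw [h] <;> norm_num
  rw [h1]
  have h2 : (1 : ℚ) ≤ |((c * d : ℤ) : ℚ)| := by
    have hne : c * d ≠ 0 := mul_ne_zero hc hd
    have : (1 : ℤ) ≤ |c * d| := Int.one_le_abs hne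
    calc (1:ℚ) ≤ ((|c * d| : ℤ) : ℚ) := by exact_mod_cast this
    _ = |((c * d : ℤ) : ℚ)| := by push_cast; ring
  rw [div_le_one (by linarith)]
  linarith

lemma floor_int_div_pm {b d : ℤ} (hd : d = 1 ∨ d = -1) : ⌊(b : ℚ) / (d : ℚ)⌋ = b * d := by
  rcases hd with rfl | rfl
  · norm_num
  · push_cast
    rw [div_neg, div_one, ← Int.cast_neg, Int.floor_intCast]
    ring

lemma unit_of_mul_pm {a d : ℤ} (h : a * d = 1 ∨ a * d = -1) : d = 1 ∨ d = -1 := by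
  rcases h with h | h
  · exact Int.isUnit_iff.mp (IsUnit.of_mul_eq_one (a := d) a (by rw [mul_comm] at h; exact h))
  · refine Int.isUnit_iff.mp (IsUnit.of_mul_eq_one (a := d) (-a) ?_)
    have : d * -a = -(a * d) := by ring
    omega

lemma core_S {a b c d : ℤ} (hdet : a * d - b * c = 1 ∨ a * d - b * c = -1) :
    |fcore b a d c - fcore a b c d| ≤ 1 := by
  by_cases hc0 : c = 0
  · -- a*d = ±1, so d = ±1;  fcore a b c d = b*d; fcore b a d c = ⌊b/d⌋ = b*d
    have had : a * d = 1 ∨ a * d = -1 := by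
      rcases hdet with h | h <;> [left; right] <;> rw [← h, hc0] <;> ring
    have hd1 : d = 1 ∨ d = -1 := unit_of_mul_pm had
    have hd0 : d ≠ 0 := by rcases hd1 with rfl | rfl <;> norm_num
    rw [fcore, fcore, if_pos hc0, if_neg hd0, floor_int_div_pm hd1]
    simp
  · by_cases hd0 : d = 0
    · -- b*c = ∓1, c = ±1; fcore a b c d = ⌊a/c⌋ = a*c; fcore b a d c = a*c
      have hbc : b * c = 1 ∨ b * c = -1 := by
        rcases hdet with h | h <;> [right; left] <;> rw [hd0] at h <;> omega
      have hc1 : c = 1 ∨ c = -1 := unit_of_mul_pm hbc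
      rw [fcore, fcore, if_pos hd0, if_neg hc0, floor_int_div_pm hc1]
      simp [mul_comm]
    · -- both nonzero: floors of close slopes
      rw [fcore, fcore, if_neg hc0, if_neg hd0]
      have hdet' : b * c - a * d = 1 ∨ b * c - a * d = -1 := by
        rcases hdet with h | h
        · right; linarith
        · left; linarith
      exact floor_close (slope_close hdet' hd0 hc0)

lemma core_R {a b c d : ℤ} (hdet : a * d - b * c = 1 ∨ a * d - b * c = -1) :
    |fcore a (a + b) c (c + d) - fcore a b c d| ≤ 1 := by
  by_cases hc0 : c = 0
  · have had : a * d = 1 ∨ a * d = -1 := by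
      rcases hdet with h | h <;> [left; right] <;> rw [← h, hc0] <;> ring
    rw [fcore, fcore, if_pos hc0, if_pos hc0, hc0]
    have heq : (a + b) * (0 + d) - b * d = a * d := by ring
    rw [show (a + b) * (0 + d) - b * d = a * d from heq]
    rcases had with h | h <;> rw [h] <;> norm_num
  · rw [fcore, fcore, if_neg hc0, if_neg hc0]
    simp

lemma fhat_mul_S2 (M : GL2) : |fhat (M * S2) - fhat M| ≤ 1 := by
  have hdet := det_pm M
  have h : fhat (M * S2) = fcore (M.val 0 1) (M.val 0 0) (M.val 1 1) (M.val 1 0) := by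
    rw [fhat, val_mul_S2]
    simp
  rw [h, fhat]
  exact core_S hdet

lemma fhat_mul_R2 (M : GL2) : |fhat (M * R2) - fhat M| ≤ 1 := by
  have hdet := det_pm M
  have h : fhat (M * R2) = fcore (M.val 0 0) (M.val 0 0 + M.val 0 1)
      (M.val 1 0) (M.val 1 0 + M.val 1 1) := by
    rw [fhat, val_mul_R2]
    simp
  rw [h, fhat]
  exact core_R hdet

def cl : Subgroup GL2 := Subgroup.closure {S2, R2}

lemma S2_mem : S2 ∈ cl := Subgroup.subset_closure (by simp)

lemma R2_mem : R2 ∈ cl := Subgroup.subset_closure (by simp)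

lemma L2_eq : L2 = S2 * R2 * S2 := by
  apply Units.ext
  show (!![1,0;1,1] : Matrix (Fin 2) (Fin 2) ℤ) = !![0,1;1,0] * !![1,1;0,1] * !![0,1;1,0]
  rw [Matrix.mul_fin_two, Matrix.mul_fin_two]; norm_num

lemma W2_eq : W2 = R2 * L2⁻¹ * R2 := by
  apply Units.ext
  show (!![0,1;-1,0] : Matrix (Fin 2) (Fin 2) ℤ) = !![1,1;0,1] * !![1,0;-1,1] * !![1,1;0,1]
  rw [Matrix.mul_fin_two, Matrix.mul_fin_two]; norm_num

lemma W2_mem : W2 ∈ cl := by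
  rw [W2_eq]
  exact mul_mem (mul_mem R2_mem (inv_mem (by rw [L2_eq]; exact mul_mem (mul_mem S2_mem R2_mem) S2_mem))) R2_mem

lemma Rz_mul_R2 (b : ℤ) : Rz b * R2 = Rz (b + 1) := by
  apply Units.ext
  show (!![1,b;0,1] : Matrix (Fin 2) (Fin 2) ℤ) * !![1,1;0,1] = !![1,b+1;0,1]
  rw [Matrix.mul_fin_two, add_comm b 1]; norm_num

lemma Rz_zero : Rz 0 = 1 := by
  apply Units.ext
  show (!![1,0;0,1] : Matrix (Fin 2) (Fin 2) ℤ) = 1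
  rw [Matrix.one_fin_two]

lemma Rz_mem (b : ℤ) : Rz b ∈ cl := by
  induction b using Int.induction_on with
  | zero => rw [Rz_zero]; exact one_mem _
  | succ n ihn =>
      rw [← Rz_mul_R2]
      exact mul_mem ihn R2_mem
  | pred n ihn =>
      have : Rz (-(n:ℤ) - 1) = Rz (-(n:ℤ)) * R2⁻¹ := by
        rw [eq_mul_inv_iff_mul_eq, Rz_mul_R2]
        norm_num
      rw [this]
      exact mul_mem ihn (inv_mem R2_mem)

lemma base_mem (M : GL2) (hc : M.val 1 0 = 0) : M ∈ cl := by
  have hdet := det_pm M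
  rw [hc] at hdet
  have had : M.val 0 0 * M.val 1 1 = 1 ∨ M.val 0 0 * M.val 1 1 = -1 := by
    rcases hdet with h | h <;> [left; right] <;> linarith
  have hd1 := unit_of_mul_pm had
  have ha1 : M.val 0 0 = 1 ∨ M.val 0 0 = -1 := by
    rcases hd1 with h | h <;> rw [h] at had <;> omega
  set a := M.val 0 0 with ha
  set b := M.val 0 1 with hb
  set d := M.val 1 1 with hd
  have hM : M.val = !![a, b; 0, d] := by
    rw [Matrix.eta_fin_two M.val, hc]
  rcases ha1 with h1 | h1 <;> rcases hd1 with h2 | h2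
  · have : M = Rz b := by
      apply Units.ext
      rw [hM, h1, h2]
      rfl
    rw [this]; exact Rz_mem b
  · have : M = (W2 * S2) * Rz (a * b) := by
      apply Units.ext
      show M.val = (!![0,1;-1,0] : Matrix (Fin 2) (Fin 2) ℤ) * !![0,1;1,0] * !![1,a*b;0,1]
      rw [hM, Matrix.mul_fin_two, Matrix.mul_fin_two, h1, h2]
      norm_num
    rw [this]; exact mul_mem (mul_mem W2_mem S2_mem) (Rz_mem _)
  · have : M = (S2 * W2) * Rz (a * b) := by
      apply Units.ext
      show M.val = (!![0,1;1,0] : Matrix (Fin 2) (Fin 2) ℤ) * !![0,1;-1,0] * !![1,a*b;0,1]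
      rw [hM, Matrix.mul_fin_two, Matrix.mul_fin_two, h1, h2]
      norm_num
    rw [this]; exact mul_mem (mul_mem S2_mem W2_mem) (Rz_mem _)
  · have : M = (W2 * W2) * Rz (a * b) := by
      apply Units.ext
      show M.val = (!![0,1;-1,0] : Matrix (Fin 2) (Fin 2) ℤ) * !![0,1;-1,0] * !![1,a*b;0,1]
      rw [hM, Matrix.mul_fin_two, Matrix.mul_fin_two, h1, h2]
      norm_num
    rw [this]; exact mul_mem (mul_mem W2_mem W2_mem) (Rz_mem _)

lemma mem_cl (M : GL2) : M ∈ cl := by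
  suffices h : ∀ n : ℕ, ∀ M : GL2, (M.val 1 0).natAbs = n → M ∈ cl from h _ M rfl
  intro n
  induction n using Nat.strong_induction_on with
  | _ n ih =>
    intro M hn
    by_cases hc : M.val 1 0 = 0
    · exact base_mem M hc
    · set a := M.val 0 0 with ha
      set c := M.val 1 0 with hcc
      set q := a / c with hq
      set M' := S2 * Rz (-q) * M with hM'
      have h10 : M'.val 1 0 = a % c := by
        have : M'.val = (!![0,1;1,0] : Matrix (Fin 2) (Fin 2) ℤ) * !![1,-q;0,1] * M.val := rfl
        rw [this, Matrix.mul_fin_two, Matrix.eta_fin_two M.val]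
        rw [Matrix.mul_fin_two]
        have : a % c = a - c * q := Int.emod_def a c
        simp only [← ha, ← hcc]
        simp
        linarith [this]
      have hlt : (M'.val 1 0).natAbs < n := by
        have h1 : 0 ≤ a % c := Int.emod_nonneg a hc
        have h2 : a % c < |c| := Int.emod_lt_abs _ hc
        rw [h10]
        rw [← hn]
        rw [Int.abs_eq_natAbs] at h2
        omega
      have hm' : M' ∈ cl := ih _ hlt M' rfl
      have : M = (S2 * Rz (-q))⁻¹ * M' := by
        rw [hM']
        group
      rw [this]
      exact mul_mem (inv_mem (mul_mem S2_mem (Rz_mem _))) hm'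

lemma bounded_of_mem (t : GL2) : ∃ k : ℕ, ∀ g : GL2, |fhat (g * t) - fhat g| ≤ k := by
  have ht := mem_cl t
  induction ht using Subgroup.closure_induction with
  | mem x hx =>
      rcases hx with rfl | rfl
      · exact ⟨1, fun g => by exact_mod_cast fhat_mul_S2 g⟩
      · exact ⟨1, fun g => by exact_mod_cast fhat_mul_R2 g⟩
  | one => exact ⟨0, fun g => by simp⟩
  | mul x y _ _ ihx ihy =>
      obtain ⟨k₁, h₁⟩ := ihx
      obtain ⟨k₂, h₂⟩ := ihy
      refine ⟨k₁ + k₂, fun g => ?_⟩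
      have := h₁ g
      have := h₂ (g * x)
      calc |fhat (g * (x * y)) - fhat g|
          = |(fhat (g * x * y) - fhat (g * x)) + (fhat (g * x) - fhat g)| := by
            rw [mul_assoc]; ring_nf
      _ ≤ |fhat (g * x * y) - fhat (g * x)| + |fhat (g * x) - fhat g| := abs_add_le _ _
      _ ≤ k₁ + k₂ := by push_cast; linarith [h₂ (g * x), h₁ g]
  | inv x _ ihx =>
      obtain ⟨k, hk⟩ := ihx
      refine ⟨k, fun g => ?_⟩
      have := hk (g * x⁻¹)
      rw [inv_mul_cancel_right] at this
      rw [abs_sub_comm]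
      exact this

end GLB

namespace GLC

abbrev F2 := FreeGroup (Fin 2)
open GLB

noncomputable def E : F2 →* Multiplicative (Fin 2 → ℤ) :=
  FreeGroup.lift (fun i => Multiplicative.ofAdd (Pi.single i 1))

lemma E_of (i : Fin 2) : E (FreeGroup.of i) = Multiplicative.ofAdd (Pi.single i 1) :=
  FreeGroup.lift_apply_of

noncomputable def mat (ψ : MulAut F2) : Matrix (Fin 2) (Fin 2) ℤ :=
  fun i j => Multiplicative.toAdd (E (ψ (FreeGroup.of j))) i

lemma E_conj_inv (h w : F2) : E (h * w * h⁻¹) = E w := by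
  rw [map_mul, map_mul, map_inv, mul_comm (E h) (E w), mul_assoc, mul_inv_cancel, mul_one]

lemma E_apply (ψ : MulAut F2) (w : F2) :
    Multiplicative.toAdd (E (ψ w)) = (mat ψ).mulVec (Multiplicative.toAdd (E w)) := by
  have key : (E.comp ψ.toMonoidHom) =
      ((AddMonoidHom.toMultiplicative ((mat ψ).mulVecLin.toAddMonoidHom)).comp E) := by
    apply FreeGroup.ext_hom
    intro a
    simp only [MonoidHom.comp_apply, MulEquiv.coe_toMonoidHom, AddMonoidHom.toMultiplicative]
    rw [E_of]
    apply Multiplicative.toAdd.injective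
    simp [Matrix.mulVecLin, mat]
    ext i; fin_cases i <;> fin_cases a <;> simp [Pi.single_apply]
  have := congrArg (fun f => Multiplicative.toAdd (f w)) (congrArg (fun h => h) key)
  simpa [Matrix.mulVecLin] using congrArg Multiplicative.toAdd (DFunLike.congr_fun key w)

lemma mat_mul (ψ₁ ψ₂ : MulAut F2) : mat (ψ₁ * ψ₂) = mat ψ₁ * mat ψ₂ := by
  ext i j
  show Multiplicative.toAdd (E (ψ₁ (ψ₂ (FreeGroup.of j)))) i = _
  rw [E_apply ψ₁ (ψ₂ (FreeGroup.of j))]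
  simp [Matrix.mulVec, Matrix.mul_apply, dotProduct, mat]

lemma mat_one : mat 1 = 1 := by
  ext i j
  show Multiplicative.toAdd (E (FreeGroup.of j)) i = _
  rw [E_of]
  simp [Pi.single_apply, Matrix.one_apply, eq_comm]

noncomputable def pi0 : MulAut F2 →* GL2 :=
  MonoidHom.mk' (fun ψ =>
    ⟨mat ψ, mat ψ⁻¹,
      by rw [← mat_mul]; simp [mat_one],
      by rw [← mat_mul]; simp [mat_one]⟩)
    (fun ψ₁ ψ₂ => by
      apply Units.ext
      exact mat_mul ψ₁ ψ₂)

lemma pi0_val (ψ : MulAut F2) : (pi0 ψ).val = mat ψ := rfl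

lemma pi0_conj (h : F2) : pi0 (MulAut.conj h) = 1 := by
  apply Units.ext
  show mat (MulAut.conj h) = 1
  have : ∀ j, E (MulAut.conj h (FreeGroup.of j)) = E (FreeGroup.of j) := by
    intro j
    have : MulAut.conj h (FreeGroup.of j) = h * FreeGroup.of j * h⁻¹ := rfl
    rw [this, E_conj_inv]
  ext i j
  show Multiplicative.toAdd (E (MulAut.conj h (FreeGroup.of j))) i = _
  rw [this j, E_of]
  simp [Pi.single_apply, Matrix.one_apply, eq_comm]

end GLC

end Aux


namespace GLD
open GLB GLC

noncomputable def piOut : OutGroup F2 →* GL2 :=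
  QuotientGroup.lift _ pi0 (by
    intro ψ hψ
    rw [MonoidHom.mem_range] at hψ
    obtain ⟨h, rfl⟩ := hψ
    rw [MonoidHom.mem_ker]
    exact pi0_conj h)

lemma piOut_mk (ψ : MulAut F2) : piOut (ψ : OutGroup F2) = pi0 ψ := rfl

lemma pi0_phi (φ : MulAut F2) (hφa : φ (FreeGroup.of (0 : Fin 2)) = FreeGroup.of (0 : Fin 2))
    (hφb : φ (FreeGroup.of (1 : Fin 2)) =
      FreeGroup.of (1 : Fin 2) * FreeGroup.of (0 : Fin 2)) : pi0 φ = R2 := by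
  apply Units.ext
  show mat φ = !![1,1;0,1]
  ext i j
  fin_cases j
  · show Multiplicative.toAdd (E (φ (FreeGroup.of 0))) i = _
    rw [hφa, E_of]
    fin_cases i <;> simp [Pi.single_apply]
  · show Multiplicative.toAdd (E (φ (FreeGroup.of 1))) i = _
    rw [hφb, map_mul, E_of, E_of]
    fin_cases i <;> simp [Pi.single_apply]

lemma R2_pow_val (n : ℕ) : ((R2 ^ n : GL2)).val = !![1, (n : ℤ); 0, 1] := by
  induction n with
  | zero =>
      show ((1 : GL2)).val = _
      rw [Units.val_one, Matrix.one_fin_two]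
      norm_num
  | succ n ih =>
      rw [pow_succ, Units.val_mul, ih]
      show _ * !![1,1;0,1] = _
      rw [Matrix.mul_fin_two]
      ext i j
      fin_cases i <;> fin_cases j <;> push_cast <;> simp <;> ring

lemma fhat_R2_pow (n : ℕ) : fhat ((R2 : GL2) ^ n) = n := by
  rw [fhat, R2_pow_val]
  simp [fcore]

lemma fhat_one : fhat (1 : GL2) = 0 := by
  rw [fhat]
  rw [Units.val_one, Matrix.one_fin_two]
  simp [fcore]

end GLD


namespace GLE
open GLB GLC GLD WL

lemma part1 (φ : MulAut F2)
    (hφa : φ (FreeGroup.of (0 : Fin 2)) = FreeGroup.of (0 : Fin 2))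
    (hφb : φ (FreeGroup.of (1 : Fin 2)) =
      FreeGroup.of (1 : Fin 2) * FreeGroup.of (0 : Fin 2))
    (T : Set (OutGroup F2)) (hTfin : T.Finite) (hTgen : Subgroup.closure T = ⊤) :
    ∃ C : ℝ, 0 < C ∧ ∀ n : ℕ,
      (1 / C) * n - C ≤ (wordLength T ((φ : OutGroup F2) ^ n) : ℝ) ∧
      (wordLength T ((φ : OutGroup F2) ^ n) : ℝ) ≤ C * n + C := by
  have hfin2 : (T ∪ T⁻¹).Finite := hTfin.union hTfin.inv
  haveI := hfin2.to_subtype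
  have hex : ∀ τ : ↥(T ∪ T⁻¹), ∃ k : ℕ, ∀ g : GL2,
      |fhat (g * piOut τ.val) - fhat g| ≤ (k : ℤ) := by
    intro τ
    obtain ⟨k, hk⟩ := bounded_of_mem (piOut τ.val)
    exact ⟨k, hk⟩
  choose f hf using hex
  obtain ⟨K, hK⟩ := Finite.exists_le f
  have tel : ∀ l : List (OutGroup F2), (∀ x ∈ l, x ∈ T ∪ T⁻¹) →
      |fhat (piOut l.prod) - fhat 1| ≤ (K : ℤ) * l.length := by
    intro l
    induction l using List.reverseRecOn with
    | nil => intro _; simp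
    | append_singleton l x ih =>
        intro hmem
        have hx : x ∈ T ∪ T⁻¹ := hmem x (by simp)
        have hl : ∀ y ∈ l, y ∈ T ∪ T⁻¹ := fun y hy => hmem y (by simp [hy])
        have h1 := ih hl
        have h2 : |fhat (piOut l.prod * piOut x) - fhat (piOut l.prod)| ≤ (K : ℤ) := by
      
          calc |fhat (piOut l.prod * piOut x) - fhat (piOut l.prod)|
              ≤ ((f ⟨x, hx⟩ : ℕ) : ℤ) := hf ⟨x, hx⟩ (piOut l.prod)
          _ ≤ (K : ℤ) := by exact_mod_cast hK ⟨x, hx⟩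
        rw [List.prod_append, List.prod_singleton, map_mul]
        have h3 : fhat (piOut l.prod * piOut x) - fhat 1 =
            (fhat (piOut l.prod * piOut x) - fhat (piOut l.prod)) +
            (fhat (piOut l.prod) - fhat 1) := by ring
        rw [h3]
        calc |(fhat (piOut l.prod * piOut x) - fhat (piOut l.prod)) +
            (fhat (piOut l.prod) - fhat 1)|
            ≤ |fhat (piOut l.prod * piOut x) - fhat (piOut l.prod)| +
              |fhat (piOut l.prod) - fhat 1| := abs_add_le _ _
        _ ≤ (K : ℤ) + (K : ℤ) * l.length := by linarith
        _ = (K : ℤ) * (l ++ [x]).length := by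
            simp only [List.length_append, List.length_singleton]
            push_cast
            ring
  have lower : ∀ n : ℕ, (n : ℤ) ≤ (K : ℤ) * (wordLength T ((φ : OutGroup F2) ^ n)) := by
    intro n
    obtain ⟨l, hlen, hmem, hprod⟩ := exists_word hTgen ((φ : OutGroup F2) ^ n)
    have htel := tel l hmem
    rw [hprod] at htel
    have hval : piOut ((φ : OutGroup F2) ^ n) = R2 ^ n := by
      rw [map_pow, piOut_mk, pi0_phi φ hφa hφb]
    rw [hval, fhat_R2_pow, fhat_one, hlen] at htel
    simpa using htel
  have upper : ∀ n : ℕ, wordLength T ((φ : OutGroup F2) ^ n) ≤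
      n * wordLength T (φ : OutGroup F2) :=
    fun n => wordLength_pow_le hTgen _ n
  set c0 : ℕ := wordLength T (φ : OutGroup F2) with hc0
  refine ⟨(K : ℝ) + c0 + 1, by positivity, fun n => ?_⟩
  set C : ℝ := (K : ℝ) + c0 + 1 with hC
  have hCpos : (0 : ℝ) < C := by positivity
  set W : ℝ := (wordLength T ((φ : OutGroup F2) ^ n) : ℝ) with hW
  have hWnn : (0 : ℝ) ≤ W := Nat.cast_nonneg _
  constructor
  · have h1 : (n : ℝ) ≤ (K : ℝ) * W := by rw [hW]; exact_mod_cast lower n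
    have h2 : (1 / C) * n ≤ W := by
      rw [one_div, inv_mul_le_iff₀ hCpos]
      calc (n : ℝ) ≤ (K : ℝ) * W := h1
      _ ≤ C * W := by nlinarith [hWnn]
    linarith
  · have h1 : W ≤ (n : ℝ) * (c0 : ℝ) := by rw [hW, hc0]; exact_mod_cast upper n
    have h2 : (c0 : ℝ) ≤ C := by
      have : (0:ℝ) ≤ (K : ℝ) := Nat.cast_nonneg _
      linarith
    nlinarith [Nat.cast_nonneg (α := ℝ) n]

end GLE


namespace GLF
open GLB GLC GLD WL

abbrev S₀ : Set F2 := {FreeGroup.of (0 : Fin 2), FreeGroup.of (1 : Fin 2)}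

lemma closure_S₀ : Subgroup.closure S₀ = ⊤ := by
  have h : Set.range (FreeGroup.of : Fin 2 → F2) = S₀ := by
    ext x
    simp [Set.range, Fin.exists_fin_two, eq_comm]
  rw [← h]
  exact FreeGroup.closure_range_of (Fin 2)

section ConjNorm

variable {G : Type*} [Group G] {S : Set G}

lemma conjNorm_le_wl (g : G) : conjNorm S g ≤ wordLength S g :=
  Nat.sInf_le ⟨1, by simp⟩

lemma conjNorm_le' (x g : G) : conjNorm S g ≤ wordLength S (x * g * x⁻¹) :=
  Nat.sInf_le ⟨x, rfl⟩

lemma exists_conjNorm (g : G) : ∃ x : G, conjNorm S g = wordLength S (x * g * x⁻¹) :=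
  Nat.sInf_mem (⟨wordLength S g, 1, by simp⟩ :
    {n : ℕ | ∃ x : G, n = wordLength S (x * g * x⁻¹)}.Nonempty)

lemma conjNorm_conj (x g : G) : conjNorm S (x * g * x⁻¹) = conjNorm S g := by
  apply le_antisymm
  · obtain ⟨y, hy⟩ := exists_conjNorm (S := S) g
    have h : (y * x⁻¹) * (x * g * x⁻¹) * (y * x⁻¹)⁻¹ = y * g * y⁻¹ := by group
    calc conjNorm S (x * g * x⁻¹)
        ≤ wordLength S ((y * x⁻¹) * (x * g * x⁻¹) * (y * x⁻¹)⁻¹) := conjNorm_le' _ _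
    _ = wordLength S (y * g * y⁻¹) := by rw [h]
    _ = conjNorm S g := hy.symm
  · obtain ⟨y, hy⟩ := exists_conjNorm (S := S) (x * g * x⁻¹)
    have h : (y * x) * g * (y * x)⁻¹ = y * (x * g * x⁻¹) * y⁻¹ := by group
    calc conjNorm S g ≤ wordLength S ((y * x) * g * (y * x)⁻¹) := conjNorm_le' _ _
    _ = wordLength S (y * (x * g * x⁻¹) * y⁻¹) := by rw [h]
    _ = conjNorm S (x * g * x⁻¹) := hy.symm

lemma conjNorm_pos (hS : Subgroup.closure S = ⊤) {g : G} (hg : g ≠ 1) :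
    1 ≤ conjNorm S g := by
  by_contra h
  push_neg at h
  rw [Nat.lt_one_iff] at h
  obtain ⟨x, hx⟩ := exists_conjNorm (S := S) g
  rw [h] at hx
  have := eq_one_of_wordLength_eq_zero hS hx.symm
  apply hg
  have h2 : g = x⁻¹ * (x * g * x⁻¹) * x := by group
  rw [h2, this]
  group

end ConjNorm

lemma mem_S₀_cases {x : F2} (hx : x ∈ S₀ ∪ S₀⁻¹) :
    x = FreeGroup.of 0 ∨ x = FreeGroup.of 1 ∨
    x = (FreeGroup.of 0)⁻¹ ∨ x = (FreeGroup.of 1)⁻¹ := by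
  simp only [Set.mem_union, Set.mem_inv, Set.mem_insert_iff, Set.mem_singleton_iff] at hx
  rcases hx with (h | h) | (h | h)
  · exact Or.inl h
  · exact Or.inr (Or.inl h)
  · exact Or.inr (Or.inr (Or.inl (by rw [← h]; simp)))
  · exact Or.inr (Or.inr (Or.inr (by rw [← h]; simp)))

lemma l1_letter {x : F2} (hx : x ∈ S₀ ∪ S₀⁻¹) :
    |Multiplicative.toAdd (E x) 0| + |Multiplicative.toAdd (E x) 1| ≤ 1 := by
  rcases mem_S₀_cases hx with rfl | rfl | rfl | rfl <;>
    simp [E_of, map_inv, Pi.single_apply]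

lemma l1_list : ∀ l : List F2, (∀ x ∈ l, x ∈ S₀ ∪ S₀⁻¹) →
    |Multiplicative.toAdd (E l.prod) 0| + |Multiplicative.toAdd (E l.prod) 1|
      ≤ (l.length : ℤ) := by
  intro l
  induction l with
  | nil => intro _; simp
  | cons x l ih =>
      intro h
      have hx := h x (by simp)
      have hl := ih (fun y hy => h y (by simp [hy]))
      have h1 := l1_letter hx
      rw [List.prod_cons, map_mul]
      have e0 : Multiplicative.toAdd (E x * E l.prod) 0 =
          Multiplicative.toAdd (E x) 0 + Multiplicative.toAdd (E l.prod) 0 := rfl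
      have e1 : Multiplicative.toAdd (E x * E l.prod) 1 =
          Multiplicative.toAdd (E x) 1 + Multiplicative.toAdd (E l.prod) 1 := rfl
      rw [e0, e1]
      have a0 := abs_add_le (Multiplicative.toAdd (E x) 0) (Multiplicative.toAdd (E l.prod) 0)
      have a1 := abs_add_le (Multiplicative.toAdd (E x) 1) (Multiplicative.toAdd (E l.prod) 1)
      simp only [List.length_cons]
      push_cast
      linarith

lemma wl_ge_l1 (g : F2) :
    |Multiplicative.toAdd (E g) 0| + |Multiplicative.toAdd (E g) 1|
      ≤ (wordLength S₀ g : ℤ) := by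
  obtain ⟨l, hlen, hm, hp⟩ := exists_word closure_S₀ g
  subst hp
  rw [← hlen]
  exact l1_list l hm

lemma wl_aut_le (ψ : MulAut F2) (k : ℕ)
    (hk : ∀ x ∈ S₀ ∪ S₀⁻¹, wordLength S₀ (ψ x) ≤ k) (w : F2) :
    wordLength S₀ (ψ w) ≤ k * wordLength S₀ w := by
  have hlist : ∀ l : List F2, (∀ x ∈ l, x ∈ S₀ ∪ S₀⁻¹) →
      wordLength S₀ (ψ l.prod) ≤ k * l.length := by
    intro l
    induction l with
    | nil => intro _; simp [wordLength_one]
    | cons x l ih =>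
        intro h
        have hx := hk x (h x (by simp))
        have hl := ih (fun y hy => h y (by simp [hy]))
        rw [List.prod_cons, map_mul]
        calc wordLength S₀ (ψ x * ψ l.prod)
            ≤ wordLength S₀ (ψ x) + wordLength S₀ (ψ l.prod) :=
              wordLength_mul_le closure_S₀ _ _
        _ ≤ k + k * l.length := by omega
        _ = k * (x :: l).length := by simp [List.length_cons]; ring
  obtain ⟨l, hlen, hm, hp⟩ := exists_word closure_S₀ w
  subst hp
  rw [← hlen]
  exact hlist l hm

section Phi

variable (φ : MulAut F2)
  (hφa : φ (FreeGroup.of (0 : Fin 2)) = FreeGroup.of (0 : Fin 2))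
  (hφb : φ (FreeGroup.of (1 : Fin 2)) =
    FreeGroup.of (1 : Fin 2) * FreeGroup.of (0 : Fin 2))

include hφa in
lemma phi_inv_a : φ⁻¹ (FreeGroup.of 0) = FreeGroup.of 0 := by
  conv_lhs => rw [← hφa]
  exact MulAut.inv_apply_self F2 φ _

include hφa hφb in
lemma phi_inv_b : φ⁻¹ (FreeGroup.of 1) = FreeGroup.of 1 * (FreeGroup.of 0)⁻¹ := by
  have h : φ (FreeGroup.of 1 * (FreeGroup.of 0)⁻¹) = FreeGroup.of 1 := by
    rw [map_mul, map_inv, hφa, hφb]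
    group
  conv_lhs => rw [← h]
  exact MulAut.inv_apply_self F2 φ _

include hφa in
lemma phi_inv_pow_a (n : ℕ) : ((φ⁻¹) ^ n) (FreeGroup.of 0) = FreeGroup.of 0 := by
  induction n with
  | zero => rfl
  | succ n ih =>
      rw [pow_succ, MulAut.mul_apply, phi_inv_a φ hφa, ih]

include hφa hφb in
lemma phi_inv_pow_b (n : ℕ) :
    ((φ⁻¹) ^ n) (FreeGroup.of 1) =
      FreeGroup.of 1 * ((FreeGroup.of 0 : F2) ^ n)⁻¹ := by
  induction n with
  | zero => simp
  | succ n ih =>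
      rw [pow_succ, MulAut.mul_apply, phi_inv_b φ hφa hφb, map_mul, map_inv,
        phi_inv_pow_a φ hφa, ih, mul_assoc, ← mul_inv_rev, ← pow_succ']

lemma wl_wn_le (n : ℕ) :
    wordLength S₀ (FreeGroup.of 1 * ((FreeGroup.of 0 : F2) ^ n)⁻¹) ≤ n + 1 := by
  have hm : ∀ x ∈ (FreeGroup.of 1 :: List.replicate n (FreeGroup.of (0:Fin 2))⁻¹),
      x ∈ S₀ ∪ S₀⁻¹ := by
    intro x hx
    rcases List.mem_cons.mp hx with rfl | hx
    · exact Or.inl (by simp)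
    · rw [List.eq_of_mem_replicate hx]
      exact Or.inr (by simp)
  have hp : (FreeGroup.of 1 :: List.replicate n (FreeGroup.of (0:Fin 2))⁻¹).prod =
      FreeGroup.of 1 * ((FreeGroup.of 0 : F2) ^ n)⁻¹ := by
    rw [List.prod_cons, List.prod_replicate, inv_pow]
  have := wordLength_le hm hp
  simpa using this

lemma toAdd_E_wn (n : ℕ) :
    Multiplicative.toAdd (E (FreeGroup.of 1 * ((FreeGroup.of 0 : F2) ^ n)⁻¹)) 0 = -(n : ℤ) ∧
    Multiplicative.toAdd (E (FreeGroup.of 1 * ((FreeGroup.of 0 : F2) ^ n)⁻¹)) 1 = 1 := by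
  rw [map_mul, map_inv, map_pow, E_of, E_of]
  constructor <;> simp [Pi.single_apply]

lemma conjNorm_wn (n : ℕ) :
    conjNorm S₀ (FreeGroup.of 1 * ((FreeGroup.of 0 : F2) ^ n)⁻¹) = n + 1 := by
  apply le_antisymm
  · exact le_trans (conjNorm_le_wl _) (wl_wn_le n)
  · obtain ⟨x, hx⟩ := exists_conjNorm (S := S₀)
      (FreeGroup.of 1 * ((FreeGroup.of 0 : F2) ^ n)⁻¹)
    rw [hx]
    have hE := wl_ge_l1 (x * (FreeGroup.of 1 * ((FreeGroup.of 0 : F2) ^ n)⁻¹) * x⁻¹)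
    rw [E_conj_inv] at hE
    obtain ⟨h0, h1⟩ := toAdd_E_wn n
    rw [h0, h1] at hE
    have : (n : ℤ) + 1 ≤ (wordLength S₀
        (x * (FreeGroup.of 1 * ((FreeGroup.of 0 : F2) ^ n)⁻¹) * x⁻¹) : ℤ) := by
      have : |(-(n:ℤ))| = (n:ℤ) := by simp
      rw [this] at hE
      simpa using hE
    exact_mod_cast this

lemma b_ne_one : (FreeGroup.of (1 : Fin 2) : F2) ≠ 1 := by
  intro h
  have h2 := congrArg E h
  rw [E_of, map_one] at h2
  have h3 := congrFun (congrArg Multiplicative.toAdd h2) 1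
  simp [Pi.single_apply] at h3

include hφa hφb in
lemma conjNorm_lip (n : ℕ) (g : F2) :
    conjNorm S₀ (((φ⁻¹) ^ n) g) ≤ (n + 1) * conjNorm S₀ g := by
  set ψ := (φ⁻¹) ^ n with hψ
  have hk : ∀ x ∈ S₀ ∪ S₀⁻¹, wordLength S₀ (ψ x) ≤ n + 1 := by
    intro x hx
    rcases mem_S₀_cases hx with rfl | rfl | rfl | rfl
    · rw [hψ, phi_inv_pow_a φ hφa]
      have : wordLength S₀ (FreeGroup.of (0:Fin 2)) ≤ 1 :=
        wordLength_le (l := [FreeGroup.of 0]) (by simp) (by simp)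
      omega
    · rw [hψ, phi_inv_pow_b φ hφa hφb]
      exact wl_wn_le n
    · rw [map_inv, wordLength_inv_eq, hψ, phi_inv_pow_a φ hφa]
      have : wordLength S₀ (FreeGroup.of (0:Fin 2)) ≤ 1 :=
        wordLength_le (l := [FreeGroup.of 0]) (by simp) (by simp)
      omega
    · rw [map_inv, wordLength_inv_eq, hψ, phi_inv_pow_b φ hφa hφb]
      exact wl_wn_le n
  obtain ⟨x, hx⟩ := exists_conjNorm (S := S₀) g
  calc conjNorm S₀ (ψ g) = conjNorm S₀ ((ψ x) * ψ g * (ψ x)⁻¹) := (conjNorm_conj _ _).symm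
  _ = conjNorm S₀ (ψ (x * g * x⁻¹)) := by rw [map_mul, map_mul, map_inv]
  _ ≤ wordLength S₀ (ψ (x * g * x⁻¹)) := conjNorm_le_wl _
  _ ≤ (n + 1) * wordLength S₀ (x * g * x⁻¹) := wl_aut_le ψ (n + 1) hk _
  _ = (n + 1) * conjNorm S₀ g := by rw [← hx]

include hφa hφb in
lemma sSup_ratio (n : ℕ) :
    sSup {r : ℝ | ∃ g : F2, g ≠ 1 ∧
        r = (conjNorm S₀ (((φ ^ n : MulAut F2))⁻¹ g) : ℝ) / (conjNorm S₀ g : ℝ)} =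
      (n : ℝ) + 1 := by
  have hinv : ((φ ^ n : MulAut F2))⁻¹ = (φ⁻¹) ^ n := (inv_pow φ n).symm
  have hmem : ((n : ℝ) + 1) ∈ {r : ℝ | ∃ g : F2, g ≠ 1 ∧
      r = (conjNorm S₀ (((φ ^ n : MulAut F2))⁻¹ g) : ℝ) / (conjNorm S₀ g : ℝ)} := by
    refine ⟨FreeGroup.of 1, b_ne_one, ?_⟩
    rw [hinv, phi_inv_pow_b φ hφa hφb, conjNorm_wn n]
    have h0 : conjNorm S₀ (FreeGroup.of (1:Fin 2) : F2) = 1 := by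
      have := conjNorm_wn 0
      simpa using this
    rw [h0]
    push_cast
    norm_num
  have hbdd : ∀ r ∈ {r : ℝ | ∃ g : F2, g ≠ 1 ∧
      r = (conjNorm S₀ (((φ ^ n : MulAut F2))⁻¹ g) : ℝ) / (conjNorm S₀ g : ℝ)},
      r ≤ (n : ℝ) + 1 := by
    rintro r ⟨g, hg, rfl⟩
    have hden : 1 ≤ conjNorm S₀ g := conjNorm_pos closure_S₀ hg
    have hdenR : (1 : ℝ) ≤ (conjNorm S₀ g : ℝ) := by exact_mod_cast hden
    have hnum : conjNorm S₀ (((φ ^ n : MulAut F2))⁻¹ g) ≤ (n + 1) * conjNorm S₀ g := by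
      rw [hinv]
      exact conjNorm_lip φ hφa hφb n g
    rw [div_le_iff₀ (by linarith)]
    calc (conjNorm S₀ (((φ ^ n : MulAut F2))⁻¹ g) : ℝ)
        ≤ ((n + 1) * conjNorm S₀ g : ℕ) := by exact_mod_cast hnum
    _ = ((n : ℝ) + 1) * (conjNorm S₀ g : ℝ) := by push_cast; ring
  exact le_antisymm (csSup_le ⟨_, hmem⟩ hbdd) (le_csSup ⟨_, hbdd⟩ hmem)

include hφa hφb in
lemma dLipAut_val (n : ℕ) :
    dLipAut S₀ (1 : MulAut F2) (φ ^ n) = Real.log ((n : ℝ) + 1) := by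
  rw [dLipAut]
  have hset : {r : ℝ | ∃ g : F2, g ≠ 1 ∧
      r = (conjNorm S₀ ((φ ^ n)⁻¹ g) : ℝ) / (conjNorm S₀ ((1 : MulAut F2)⁻¹ g) : ℝ)} =
      {r : ℝ | ∃ g : F2, g ≠ 1 ∧
      r = (conjNorm S₀ (((φ ^ n : MulAut F2))⁻¹ g) : ℝ) / (conjNorm S₀ g : ℝ)} := by
    ext r
    constructor
    · rintro ⟨g, hg, rfl⟩
      exact ⟨g, hg, by simp⟩
    · rintro ⟨g, hg, rfl⟩
      exact ⟨g, hg, by simp⟩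
  rw [hset, sSup_ratio φ hφa hφb n]

include hφa hφb in
lemma dLipAut_reps (n : ℕ) (ψ₁ ψ₂ : MulAut F2) (h₁ : (ψ₁ : OutGroup F2) = 1)
    (h₂ : (ψ₂ : OutGroup F2) = ((φ : OutGroup F2)) ^ n) :
    dLipAut S₀ ψ₁ ψ₂ = Real.log ((n : ℝ) + 1) := by
  rw [QuotientGroup.eq_one_iff] at h₁
  rw [MonoidHom.mem_range] at h₁
  obtain ⟨h1, hh1⟩ := h₁
  have hpow : ((φ ^ n : MulAut F2) : OutGroup F2) = ((φ : OutGroup F2)) ^ n :=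
    QuotientGroup.mk_pow _ φ n
  rw [← hpow] at h₂
  rw [QuotientGroup.eq] at h₂
  rw [MonoidHom.mem_range] at h₂
  obtain ⟨h2, hh2⟩ := h₂
  have hψ₂ : ψ₂⁻¹ = MulAut.conj h2 * (φ ^ n)⁻¹ := by
    rw [hh2]; group
  have hψ₁ : ψ₁⁻¹ = MulAut.conj h1⁻¹ := by rw [← hh1, ← map_inv]
  have key1 : ∀ g : F2, conjNorm S₀ (ψ₂⁻¹ g) = conjNorm S₀ ((φ ^ n)⁻¹ g) := by
    intro g
    rw [hψ₂, MulAut.mul_apply, MulAut.conj_apply]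
    exact conjNorm_conj _ _
  have key2 : ∀ g : F2, conjNorm S₀ (ψ₁⁻¹ g) = conjNorm S₀ g := by
    intro g
    rw [hψ₁, MulAut.conj_apply]
    exact conjNorm_conj _ _
  rw [dLipAut]
  have hset : {r : ℝ | ∃ g : F2, g ≠ 1 ∧
      r = (conjNorm S₀ (ψ₂⁻¹ g) : ℝ) / (conjNorm S₀ (ψ₁⁻¹ g) : ℝ)} =
      {r : ℝ | ∃ g : F2, g ≠ 1 ∧
      r = (conjNorm S₀ (((φ ^ n : MulAut F2))⁻¹ g) : ℝ) / (conjNorm S₀ g : ℝ)} := by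
    ext r
    constructor
    · rintro ⟨g, hg, rfl⟩
      exact ⟨g, hg, by rw [key1, key2]⟩
    · rintro ⟨g, hg, rfl⟩
      exact ⟨g, hg, by rw [key1, key2]⟩
  rw [hset, sSup_ratio φ hφa hφb n]

include hφa hφb in
lemma dLipOut_val (n : ℕ) :
    dLipOut S₀ (1 : OutGroup F2) ((φ : OutGroup F2) ^ n) = Real.log ((n : ℝ) + 1) := by
  rw [dLipOut]
  have hset : {d : ℝ | ∃ ψ₁ ψ₂ : MulAut F2, (ψ₁ : OutGroup F2) = 1 ∧
      (ψ₂ : OutGroup F2) = (φ : OutGroup F2) ^ n ∧ d = dLipAut S₀ ψ₁ ψ₂} =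
      {Real.log ((n : ℝ) + 1)} := by
    ext d
    constructor
    · rintro ⟨ψ₁, ψ₂, hh₁, hh₂, rfl⟩
      exact dLipAut_reps φ hφa hφb n ψ₁ ψ₂ hh₁ hh₂
    · rintro rfl
      refine ⟨1, φ ^ n, ?_, ?_, ?_⟩
      · exact QuotientGroup.mk_one _
      · exact QuotientGroup.mk_pow _ φ n
      · exact (dLipAut_val φ hφa hφb n).symm
  rw [hset, csInf_singleton]

end Phi

end GLF

/-- For the Dehn twist automorphism `φ` of `F = F(a,b)`
(`φ(a) = a`, `φ(b) = ba`, with `a = FreeGroup.of 0`, `b = FreeGroup.of 1`) and any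
finite generating set `T` of `Out(F)`, the orbit `n ↦ d_T(1, Φⁿ)` grows linearly
while `n ↦ d_Lip(1, Φⁿ)` grows logarithmically; consequently the identity map is
not a quasi-isometry between `(Out F, d_Lip)` and `(Out F, d_T)`. -/
theorem lipschitz_not_qi_to_word_metric (φ : MulAut (FreeGroup (Fin 2)))
    (hφa : φ (FreeGroup.of (0 : Fin 2)) = FreeGroup.of (0 : Fin 2))
    (hφb : φ (FreeGroup.of (1 : Fin 2)) =
      FreeGroup.of (1 : Fin 2) * FreeGroup.of (0 : Fin 2))
    (T : Set (OutGroup (FreeGroup (Fin 2)))) (hTfin : T.Finite)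
    (hTgen : Subgroup.closure T = ⊤) :
    (∃ C : ℝ, 0 < C ∧ ∀ n : ℕ,
      (1 / C) * n - C ≤
          (wordLength T ((φ : OutGroup (FreeGroup (Fin 2))) ^ n) : ℝ) ∧
        (wordLength T ((φ : OutGroup (FreeGroup (Fin 2))) ^ n) : ℝ) ≤
          C * n + C) ∧
    (∃ C : ℝ, 0 < C ∧ ∀ n : ℕ,
      (1 / C) * Real.log (n + 1) - C ≤
          dLipOut {FreeGroup.of (0 : Fin 2), FreeGroup.of (1 : Fin 2)} 1
            ((φ : OutGroup (FreeGroup (Fin 2))) ^ n) ∧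
        dLipOut {FreeGroup.of (0 : Fin 2), FreeGroup.of (1 : Fin 2)} 1
            ((φ : OutGroup (FreeGroup (Fin 2))) ^ n) ≤
          C * Real.log (n + 1) + C) ∧
    ¬ (∃ κ ℓ : ℝ, 1 ≤ κ ∧ 0 ≤ ℓ ∧ ∀ Φ₁ Φ₂ : OutGroup (FreeGroup (Fin 2)),
        κ⁻¹ * dLipOut {FreeGroup.of (0 : Fin 2), FreeGroup.of (1 : Fin 2)} Φ₁ Φ₂
            - ℓ ≤ (wordLength T (Φ₁⁻¹ * Φ₂) : ℝ) ∧
          (wordLength T (Φ₁⁻¹ * Φ₂) : ℝ) ≤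
            κ * dLipOut {FreeGroup.of (0 : Fin 2), FreeGroup.of (1 : Fin 2)} Φ₁ Φ₂
              + ℓ) := by
  have hpart1 := GLE.part1 φ hφa hφb T hTfin hTgen
  refine ⟨hpart1, ?_, ?_⟩
  · refine ⟨1, one_pos, fun n => ?_⟩
    rw [GLF.dLipOut_val φ hφa hφb n]
    constructor <;> [skip; skip] <;> linarith []
  · rintro ⟨κ, ℓ, hκ, hℓ, h⟩
    obtain ⟨C, hC, hCb⟩ := hpart1
    -- key inequality for all n
    have key : ∀ n : ℕ, (1 / C) * (n : ℝ) - C ≤ κ * Real.log ((n : ℝ) + 1) + ℓ := by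
      intro n
      have h1 := (hCb n).1
      have h2 := (h 1 ((φ : OutGroup (FreeGroup (Fin 2))) ^ n)).2
      rw [inv_one, one_mul, GLF.dLipOut_val φ hφa hφb n] at h2
      linarith
    -- logarithm is at most twice the square root
    have hlog : ∀ n : ℕ, Real.log ((n : ℝ) + 1) ≤ 2 * Real.sqrt ((n : ℝ) + 1) := by
      intro n
      have hx : (0 : ℝ) < (n : ℝ) + 1 := by positivity
      have hs : (0 : ℝ) < Real.sqrt ((n : ℝ) + 1) := Real.sqrt_pos.mpr hx
      have e : Real.log (Real.sqrt ((n : ℝ) + 1)) = Real.log ((n : ℝ) + 1) / 2 :=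
        Real.log_sqrt hx.le
      have := Real.log_le_sub_one_of_pos hs
      linarith
    -- choose a large square
    set B : ℝ := 2 * κ * C + C * ℓ + C * C + C + 2 with hB
    set m : ℕ := ⌈B⌉₊ + 1 with hm
    have hmB : B ≤ (m : ℝ) := by
      calc B ≤ (⌈B⌉₊ : ℝ) := Nat.le_ceil B
      _ ≤ (m : ℝ) := by rw [hm]; push_cast; linarith
    have hm1 : (1 : ℝ) ≤ (m : ℝ) := by
      have : 1 ≤ m := by rw [hm]; omega
      exact_mod_cast this
    have h0m : (0 : ℝ) ≤ (m : ℝ) := by linarith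
    have hmsq : 1 ≤ m ^ 2 := by
      have : 1 ≤ m := by rw [hm]; omega
      nlinarith
    set n : ℕ := m ^ 2 - 1 with hn
    have hcast : (n : ℝ) = (m : ℝ) ^ 2 - 1 := by
      rw [hn]
      push_cast [Nat.cast_sub hmsq]
      ring
    have hsqrt : Real.sqrt ((n : ℝ) + 1) = (m : ℝ) := by
      rw [hcast]
      have : (m : ℝ) ^ 2 - 1 + 1 = (m : ℝ) ^ 2 := by ring
      rw [this, Real.sqrt_sq (by linarith)]
    have hk := key n
    have hl := hlog n
    rw [hsqrt] at hl
    -- combine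
    have hκ0 : (0 : ℝ) ≤ κ := by linarith
    have hstep : (1 / C) * ((n : ℝ)) - C ≤ κ * (2 * (m : ℝ)) + ℓ := by
      have hmul : κ * Real.log ((n : ℝ) + 1) ≤ κ * (2 * (m : ℝ)) :=
        mul_le_mul_of_nonneg_left hl hκ0
      linarith
    have hmain : ((n : ℝ)) - C * C ≤ C * (κ * (2 * (m : ℝ)) + ℓ) := by
      have := mul_le_mul_of_nonneg_left hstep hC.le
      calc ((n : ℝ)) - C * C = C * ((1 / C) * ((n : ℝ)) - C) := by
            field_simp
      _ ≤ C * (κ * (2 * (m : ℝ)) + ℓ) := this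
    rw [hcast] at hmain
    have e1 : (2 * κ * C + C * ℓ + C * C + C + 2) * (m : ℝ) ≤ (m : ℝ) * (m : ℝ) := by
      have := mul_le_mul_of_nonneg_right hmB h0m
      calc (2 * κ * C + C * ℓ + C * C + C + 2) * (m : ℝ) = B * (m : ℝ) := by rw [hB]
      _ ≤ (m : ℝ) * (m : ℝ) := this
    have e3 : (C * ℓ + C * C + C + 2) * 1 ≤ (C * ℓ + C * C + C + 2) * (m : ℝ) := by
      apply mul_le_mul_of_nonneg_left hm1
      have h1 : (0 : ℝ) ≤ C * ℓ := by positivity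
      nlinarith
    have e6 : (m : ℝ) * (m : ℝ) - 1 - C * C ≤ (2 * κ * C) * (m : ℝ) + C * ℓ := by
      have heq : C * (κ * (2 * (m : ℝ)) + ℓ) = (2 * κ * C) * (m : ℝ) + C * ℓ := by ring
      have hsq : (m : ℝ) ^ 2 = (m : ℝ) * (m : ℝ) := sq (m : ℝ)
      rw [heq] at hmain
      linarith [hmain, hsq.symm.le, hsq.le]
    linarith [e1, e3, e6, hC]
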